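/- For vector fields u, v in H^1_0(Ω)^d, the EMAC trilinear form satisfies c(u,v,u) = -½ c(v,u,u), where c(u,v,w) = 2(D(u)v, w) + ((∇·u)v, w). -/

import Mathlib

open MeasureTheory Finset

/-- Partial derivative ∂_j u_i at x. -/
noncomputable def pd {d : ℕ} (u : (Fin d → ℝ) → (Fin d → ℝ)) (j i : Fin d)
    (x : Fin d → ℝ) : ℝ := fderiv ℝ u x (Pi.single j 1) i

/-- Symmetric gradient D(u)_{ij} = (∂_j u_i + ∂_i u_j)/2. -/
noncomputable def symGrad {d : ℕ} (u : (Fin d → ℝ) → (Fin d → ℝ)) (i j : Fin d)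
    (x : Fin d → ℝ) : ℝ := (pd u j i x + pd u i j x) / 2

/-- Divergence ∇·u at x. -/
noncomputable def divg {d : ℕ} (u : (Fin d → ℝ) → (Fin d → ℝ)) (x : Fin d → ℝ) : ℝ :=
  ∑ i, pd u i i x

/-- EMAC trilinear form c(u,v,w) = 2(D(u)v, w) + ((∇·u)v, w) over Ω. -/
noncomputable def cform {d : ℕ} (Ω : Set (Fin d → ℝ))
    (u v w : (Fin d → ℝ) → (Fin d → ℝ)) : ℝ :=
  ∫ x in Ω, (2 * ∑ i, (∑ j, symGrad u i j x * v x j) * w x i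
      + divg u x * ∑ i, v x i * w x i)

lemma fderiv_zero_of_nmem_tsupport {E G : Type*} [NormedAddCommGroup E] [NormedSpace ℝ E]
    [NormedAddCommGroup G] [NormedSpace ℝ G] {F : E → G} {x : E}
    (hx : x ∉ tsupport F) : fderiv ℝ F x = 0 := by
  have h : F =ᶠ[nhds x] 0 := notMem_tsupport_iff_eventuallyEq.1 hx
  rw [h.fderiv_eq]
  exact fderiv_const_apply 0

/-- The integral over ℝⁿ⁺¹ of the divergence of a C¹ compactly supported vector field is 0. -/
lemma integral_div_eq_zero {n : ℕ} (F : (Fin (n+1) → ℝ) → (Fin (n+1) → ℝ))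
    (hF : ContDiff ℝ 1 F) (hFs : HasCompactSupport F) :
    ∫ x, ∑ i, fderiv ℝ F x (Pi.single i 1) i = 0 := by
  obtain ⟨R, hR⟩ := hFs.isCompact.isBounded.exists_norm_le
  set M : ℝ := |R| + 1 with hM
  have hMpos : 0 < M := by positivity
  have hsupp : ∀ x ∈ tsupport F, ∀ i, |x i| < M := by
    intro x hx i
    calc |x i| ≤ ‖x‖ := by
          simpa [Real.norm_eq_abs] using norm_le_pi_norm x i
      _ ≤ R := hR x hx
      _ < M := by rw [hM]; nlinarith [abs_nonneg R, le_abs_self R]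
  set a : Fin (n+1) → ℝ := fun _ => -M with ha
  set b : Fin (n+1) → ℝ := fun _ => M with hb
  have hab : a ≤ b := fun i => by simp [ha, hb]; linarith
  have hFd : Differentiable ℝ F := hF.differentiable one_ne_zero
  have hdivcont : Continuous fun x => ∑ i, fderiv ℝ F x (Pi.single i 1) i := by
    apply continuous_finset_sum
    intro i _
    exact (continuous_apply i).comp
      ((ContinuousLinearMap.apply ℝ (Fin (n+1) → ℝ) (Pi.single i 1)).continuous.comp
        (hF.continuous_fderiv one_ne_zero))
  have hdivsupp : ∀ x ∉ tsupport F, (∑ i, fderiv ℝ F x (Pi.single i 1) i) = 0 := by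
    intro x hx
    simp [fderiv_zero_of_nmem_tsupport hx]
  have hnotin : ∀ x ∉ Set.pi Set.univ fun i => Set.Ioo (a i) (b i), x ∉ tsupport F := by
    intro x hx hmem
    exact hx fun i _ => by
      have h2 := abs_lt.1 (hsupp x hmem i)
      exact ⟨h2.1, h2.2⟩
  have hIcc : ∫ x, ∑ i, fderiv ℝ F x (Pi.single i 1) i
      = ∫ x in Set.Icc a b, ∑ i, fderiv ℝ F x (Pi.single i 1) i := by
    rw [setIntegral_eq_integral_of_forall_compl_eq_zero]
    intro x hx
    apply hdivsupp
    apply hnotin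
    intro hmem
    exact hx (Set.mem_Icc.2 ⟨fun i => (hmem i (Set.mem_univ i)).1.le,
      fun i => (hmem i (Set.mem_univ i)).2.le⟩)
  rw [hIcc]
  have hInt : IntegrableOn (fun x => ∑ i, fderiv ℝ F x (Pi.single i 1) i) (Set.Icc a b) := by
    apply Integrable.integrableOn
    apply hdivcont.integrable_of_hasCompactSupport
    exact HasCompactSupport.intro hFs fun x hx => hdivsupp x hx
  rw [MeasureTheory.integral_divergence_of_hasFDerivAt_off_countable a b hab F
    (fun x => fderiv ℝ F x) ∅ Set.countable_empty (hF.continuous.continuousOn)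
    (fun x _ => (hFd x).hasFDerivAt) hInt]
  apply Finset.sum_eq_zero
  intro i _
  have hzero : ∀ (c : ℝ), |c| = M → ∀ y : Fin n → ℝ, F (i.insertNth c y) i = 0 := by
    intro c hc y
    have : i.insertNth c y ∉ tsupport F := by
      intro hmem
      have := hsupp _ hmem i
      rw [Fin.insertNth_apply_same] at this
      rw [hc] at this
      exact lt_irrefl M this
    simp [image_eq_zero_of_notMem_tsupport this]
  rw [show (∫ x in Set.Icc (a ∘ i.succAbove) (b ∘ i.succAbove), F (i.insertNth (b i) x) i)
      = ∫ x in Set.Icc (a ∘ i.succAbove) (b ∘ i.succAbove), (0:ℝ) from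
      integral_congr_ae (Filter.Eventually.of_forall fun y => hzero (b i) (by simp [hb]; positivity) y),
    show (∫ x in Set.Icc (a ∘ i.succAbove) (b ∘ i.succAbove), F (i.insertNth (a i) x) i)
      = ∫ x in Set.Icc (a ∘ i.succAbove) (b ∘ i.succAbove), (0:ℝ) from
      integral_congr_ae (Filter.Eventually.of_forall fun y => hzero (a i) (by simp [ha, abs_of_pos hMpos]) y)]
  simp

lemma sum_sum_antisymm {d : ℕ} (f : Fin d → Fin d → ℝ) (hf : ∀ i j, f i j + f j i = 0) :
    ∑ i, ∑ j, f i j = 0 := by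
  have h : ∑ i, ∑ j, f i j = ∑ i, ∑ j, f j i := Finset.sum_comm
  have h2 : (2:ℝ) * ∑ i, ∑ j, f i j = 0 := by
    rw [two_mul]
    nth_rewrite 2 [h]
    rw [← Finset.sum_add_distrib]
    simp only [← Finset.sum_add_distrib]
    exact Finset.sum_eq_zero fun i _ => Finset.sum_eq_zero fun j _ => hf i j
  linarith

lemma keyalg {d : ℕ} (a b : Fin d → Fin d → ℝ) (U V : Fin d → ℝ) :
    ∑ i, ((∑ j, U j * V j) * a i i + U i * (∑ j, (U j * b i j + V j * a i j))
      + (1/2) * ((∑ j, U j * U j) * b i i + V i * (∑ j, (U j * a i j + U j * a i j))))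
    = (2 * ∑ i, (∑ j, ((a j i + a i j)/2) * V j) * U i + (∑ i, a i i) * (∑ i, V i * U i))
      + (1/2) * (2 * ∑ i, (∑ j, ((b j i + b i j)/2) * U j) * U i
          + (∑ i, b i i) * (∑ i, U i * U i)) := by
  rw [← sub_eq_zero]
  simp only [Finset.mul_sum, Finset.sum_mul, mul_add, ← Finset.sum_add_distrib,
    ← Finset.sum_sub_distrib]
  exact sum_sum_antisymm _ fun i j => by ring

lemma pointwise_fderiv {d : ℕ} (u v : (Fin d → ℝ) → (Fin d → ℝ))
    (hu : ContDiff ℝ 1 u) (hv : ContDiff ℝ 1 v) (x : Fin d → ℝ) :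
    ∑ i, fderiv ℝ (fun y k => (∑ j, u y j * v y j) * u y k
        + (1/2) * ((∑ j, u y j * u y j) * v y k)) x (Pi.single i 1) i
    = ∑ i, ((∑ j, u x j * v x j) * pd u i i x
        + u x i * (∑ j, (u x j * pd v i j x + v x j * pd u i j x))
        + (1/2) * ((∑ j, u x j * u x j) * pd v i i x
        + v x i * (∑ j, (u x j * pd u i j x + u x j * pd u i j x)))) := by
  have hud : ∀ j, DifferentiableAt ℝ (fun y => u y j) x :=
    fun j => ((contDiff_pi.1 hu j).differentiable one_ne_zero) x
  have hvd : ∀ j, DifferentiableAt ℝ (fun y => v y j) x :=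
    fun j => ((contDiff_pi.1 hv j).differentiable one_ne_zero) x
  have hA : DifferentiableAt ℝ (fun y => ∑ j, u y j * v y j) x :=
    DifferentiableAt.fun_sum fun j _ => (hud j).mul (hvd j)
  have hB : DifferentiableAt ℝ (fun y => ∑ j, u y j * u y j) x :=
    DifferentiableAt.fun_sum fun j _ => (hud j).mul (hud j)
  have hφ : ∀ k, DifferentiableAt ℝ (fun y => (∑ j, u y j * v y j) * u y k
      + (1/2) * ((∑ j, u y j * u y j) * v y k)) x :=
    fun k => (hA.mul (hud k)).add ((hB.mul (hvd k)).const_mul _)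
  have hupi : fderiv ℝ u x = ContinuousLinearMap.pi fun j => fderiv ℝ (fun y => u y j) x :=
    fderiv_pi hud
  have hvpi : fderiv ℝ v x = ContinuousLinearMap.pi fun j => fderiv ℝ (fun y => v y j) x :=
    fderiv_pi hvd
  have hpdu : ∀ (k j : Fin d), fderiv ℝ (fun y => u y j) x (Pi.single k 1) = pd u k j x := by
    intro k j
    rw [pd, hupi, ContinuousLinearMap.pi_apply]
  have hpdv : ∀ (k j : Fin d), fderiv ℝ (fun y => v y j) x (Pi.single k 1) = pd v k j x := by
    intro k j
    rw [pd, hvpi, ContinuousLinearMap.pi_apply]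
  have hmuv : ∀ j : Fin d, fderiv ℝ (fun y => u y j * v y j) x
      = u x j • fderiv ℝ (fun y => v y j) x + v x j • fderiv ℝ (fun y => u y j) x :=
    fun j => fderiv_mul (hud j) (hvd j)
  have hmuu : ∀ j : Fin d, fderiv ℝ (fun y => u y j * u y j) x
      = u x j • fderiv ℝ (fun y => u y j) x + u x j • fderiv ℝ (fun y => u y j) x :=
    fun j => fderiv_mul (hud j) (hud j)
  refine Finset.sum_congr rfl fun i _ => ?_
  rw [fderiv_pi hφ, ContinuousLinearMap.pi_apply,
    fderiv_fun_add (hA.fun_mul (hud i)) ((hB.fun_mul (hvd i)).const_mul _),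
    fderiv_fun_mul hA (hud i), fderiv_const_mul (hB.fun_mul (hvd i)), fderiv_fun_mul hB (hvd i),
    fderiv_fun_sum (fun j _ => (hud j).fun_mul (hvd j)), fderiv_fun_sum (fun j _ => (hud j).fun_mul (hud j))]
  simp only [hmuv, hmuu, ContinuousLinearMap.add_apply, ContinuousLinearMap.smul_apply,
    ContinuousLinearMap.coe_sum', Finset.sum_apply, smul_eq_mul, hpdu, hpdv]

lemma pd_continuous {d : ℕ} (u : (Fin d → ℝ) → (Fin d → ℝ)) (hu : ContDiff ℝ 1 u)
    (j i : Fin d) : Continuous (pd u j i) :=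
  (continuous_apply i).comp
    ((ContinuousLinearMap.apply ℝ (Fin d → ℝ) (Pi.single j 1)).continuous.comp
      (hu.continuous_fderiv one_ne_zero))

theorem cform_skew_identity {d : ℕ} (hd : d = 2 ∨ d = 3) (Ω : Set (Fin d → ℝ))
    (hΩ : IsOpen Ω) (hΩb : Bornology.IsBounded Ω)
    (u v : (Fin d → ℝ) → (Fin d → ℝ))
    (hu : ContDiff ℝ 1 u) (hus : HasCompactSupport u) (husupp : tsupport u ⊆ Ω)
    (hv : ContDiff ℝ 1 v) (hvs : HasCompactSupport v) (hvsupp : tsupport v ⊆ Ω) :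
    cform Ω u v u = -(1 / 2) * cform Ω v u u := by
  obtain ⟨n, rfl⟩ : ∃ n, d = n + 1 := by rcases hd with h | h; exacts [⟨1, by omega⟩, ⟨2, by omega⟩]
  set F : (Fin (n+1) → ℝ) → (Fin (n+1) → ℝ) :=
    fun y k => (∑ j, u y j * v y j) * u y k + (1/2) * ((∑ j, u y j * u y j) * v y k) with hF
  have hcu : ∀ j, ContDiff ℝ 1 fun y => u y j := fun j => contDiff_pi.1 hu j
  have hcv : ∀ j, ContDiff ℝ 1 fun y => v y j := fun j => contDiff_pi.1 hv j
  have hFc : ContDiff ℝ 1 F := by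
    refine contDiff_pi.2 fun k => ContDiff.add ?_ ?_
    · exact (ContDiff.sum fun j _ => (hcu j).mul (hcv j)).mul (hcu k)
    · exact contDiff_const.mul ((ContDiff.sum fun j _ => (hcu j).mul (hcu j)).mul (hcv k))
  have hF0 : ∀ y, u y = 0 → F y = 0 := by
    intro y hy
    funext k
    simp [hF, hy]
  have hFs : HasCompactSupport F := by
    apply hus.mono
    intro y hy
    by_contra h
    exact hy (hF0 y (Function.notMem_support.mp h))
  have hsub : Function.support F ⊆ Function.support u := fun y hy => by
    by_contra h
    exact hy (hF0 y (Function.notMem_support.mp h))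
  have hFΩ : tsupport F ⊆ Ω := (closure_mono hsub).trans husupp
  set g1 : (Fin (n+1) → ℝ) → ℝ := fun x => 2 * ∑ i, (∑ j, symGrad u i j x * v x j) * u x i
      + divg u x * ∑ i, v x i * u x i with hg1
  set g2 : (Fin (n+1) → ℝ) → ℝ := fun x => 2 * ∑ i, (∑ j, symGrad v i j x * u x j) * u x i
      + divg v x * ∑ i, u x i * u x i with hg2
  have hsgc : ∀ (w : (Fin (n+1) → ℝ) → (Fin (n+1) → ℝ)), ContDiff ℝ 1 w →
      ∀ i j, Continuous (symGrad w i j) := by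
    intro w hw i j
    unfold symGrad
    exact ((pd_continuous w hw j i).add (pd_continuous w hw i j)).div_const 2
  have hdvc : ∀ (w : (Fin (n+1) → ℝ) → (Fin (n+1) → ℝ)), ContDiff ℝ 1 w →
      Continuous (divg w) := by
    intro w hw
    unfold divg
    exact continuous_finset_sum _ fun i _ => pd_continuous w hw i i
  have hg1c : Continuous g1 := by
    refine Continuous.add (continuous_const.mul (continuous_finset_sum _ fun i _ =>
      Continuous.mul (continuous_finset_sum _ fun j _ =>
        (hsgc u hu i j).mul ((continuous_apply j).comp hv.continuous))
      ((continuous_apply i).comp hu.continuous))) ?_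
    exact (hdvc u hu).mul (continuous_finset_sum _ fun i _ =>
      ((continuous_apply i).comp hv.continuous).mul ((continuous_apply i).comp hu.continuous))
  have hg2c : Continuous g2 := by
    refine Continuous.add (continuous_const.mul (continuous_finset_sum _ fun i _ =>
      Continuous.mul (continuous_finset_sum _ fun j _ =>
        (hsgc v hv i j).mul ((continuous_apply j).comp hu.continuous))
      ((continuous_apply i).comp hu.continuous))) ?_
    exact (hdvc v hv).mul (continuous_finset_sum _ fun i _ =>
      ((continuous_apply i).comp hu.continuous).mul ((continuous_apply i).comp hu.continuous))
  have hg1s : HasCompactSupport g1 := by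
    apply hus.mono
    intro y hy
    by_contra h
    have h0 : u y = 0 := Function.notMem_support.mp h
    exact hy (by simp [hg1, h0])
  have hg2s : HasCompactSupport g2 := by
    apply hus.mono
    intro y hy
    by_contra h
    have h0 : u y = 0 := Function.notMem_support.mp h
    exact hy (by simp [hg2, h0])
  have hg1i : IntegrableOn g1 Ω := (hg1c.integrable_of_hasCompactSupport hg1s).integrableOn
  have hg2i : IntegrableOn g2 Ω := (hg2c.integrable_of_hasCompactSupport hg2s).integrableOn
  have key : cform Ω u v u + (1/2) * cform Ω v u u = 0 := by
    have h1 : cform Ω u v u = ∫ x in Ω, g1 x := rfl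
    have h2 : cform Ω v u u = ∫ x in Ω, g2 x := rfl
    rw [h1, h2, ← MeasureTheory.integral_const_mul,
      ← MeasureTheory.integral_add hg1i (hg2i.const_mul _)]
    have hcongr : ∀ x, g1 x + (1/2) * g2 x = ∑ i, fderiv ℝ F x (Pi.single i 1) i := by
      intro x
      rw [hF, pointwise_fderiv u v hu hv x,
        keyalg (fun k j => pd u k j x) (fun k j => pd v k j x) (u x) (v x)]
      simp only [hg1, hg2, symGrad, divg]
    rw [show (fun x => g1 x + (1/2) * g2 x) = fun x => ∑ i, fderiv ℝ F x (Pi.single i 1) i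
      from funext hcongr]
    rw [setIntegral_eq_integral_of_forall_compl_eq_zero fun x hx => by
      have : x ∉ tsupport F := fun h => hx (hFΩ h)
      simp [fderiv_zero_of_nmem_tsupport this]]
    exact integral_div_eq_zero F hFc hFs
  linarith
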